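/- Let (P1, P2) ∈ Π(s1, t1) × Π(s2, t2) be a pair of shortest paths, and let v, w be vertices such that v precedes w on both P1 and P2. Then every internal vertex of the subpath P1[v, w] that lies on P2 is contained in the subpath P2[v, w]. -/

import Mathlib

open scoped BigOperators

namespace DSP

variable {V : Type*} [Fintype V] [DecidableEq V]

/-- A path: a nonempty list of distinct vertices in which each consecutive
pair is joined by a directed edge. -/
def IsPath (E : V → V → Prop) (p : List V) : Prop :=
  p ≠ [] ∧ p.Nodup ∧ p.Chain' E

/-- A path from `x` to `y`. -/
def IsPathFrom (E : V → V → Prop) (p : List V) (x y : V) : Prop :=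
  IsPath E p ∧ p.head? = some x ∧ p.getLast? = some y

/-- The (ordered) list of edges of a path. -/
def pathEdges (p : List V) : List (V × V) := p.zip p.tail

/-- The weight of a path: the sum of its edge weights. -/
def pathWeight (ℓ : V → V → ℝ) (p : List V) : ℝ :=
  ((pathEdges p).map fun e => ℓ e.1 e.2).sum

/-- `dist x y` : the minimum weight of a path from `x` to `y`
(`⊤` if there is no such path). -/
noncomputable def dist (E : V → V → Prop) (ℓ : V → V → ℝ) (x y : V) : EReal :=
  sInf {w : EReal | ∃ p : List V, IsPathFrom E p x y ∧ (pathWeight ℓ p : EReal) = w}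

/-- A shortest path from `x` to `y` : a path from `x` to `y` whose weight
equals `dist x y`.  `Π(x, y)` is the set of all such paths. -/
def IsShortestPath (E : V → V → Prop) (ℓ : V → V → ℝ) (p : List V) (x y : V) : Prop :=
  IsPathFrom E p x y ∧ (pathWeight ℓ p : EReal) = dist E ℓ x y

/-- A directed cycle: a closed walk with at least one edge whose internal
vertices are pairwise distinct. -/
def IsCycle (E : V → V → Prop) (p : List V) : Prop :=
  2 ≤ p.length ∧ p.Chain' E ∧ p.head? = p.getLast? ∧ p.tail.Nodup

/-- `G` contains no directed cycle of negative or zero total weight. -/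
def NoNonposCycle (E : V → V → Prop) (ℓ : V → V → ℝ) : Prop :=
  ∀ p : List V, IsCycle E p → 0 < pathWeight ℓ p

/-- `G` is a DAG: it contains no directed cycle. -/
def Acyclic (E : V → V → Prop) : Prop :=
  ∀ p : List V, ¬ IsCycle E p

/-- `x` precedes `y` on the path `p` (`x = y` allowed). -/
def Precedes (p : List V) (x y : V) : Prop :=
  x ∈ p ∧ y ∈ p ∧ p.idxOf x ≤ p.idxOf y

/-- `subpath p x y` : the subpath `p[x, y]` of `p` from `x` to `y`
(for `x` preceding `y` on `p`). -/
def subpath (p : List V) (x y : V) : List V :=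
  (p.take (p.idxOf y + 1)).drop (p.idxOf x)

/-- Concatenation `p · q` of two paths (the last vertex of `p` coinciding
with the first vertex of `q`). -/
def pathConcat (p q : List V) : List V := p ++ q.tail

/-- A vertex is internal to a path if it lies on it and is not an endpoint. -/
def Internal (p : List V) (v : V) : Prop :=
  v ∈ p ∧ p.head? ≠ some v ∧ p.getLast? ≠ some v

/-- Paths `p1` from `x1` to `y1` and `p2` from `x2` to `y2` are internally
vertex-disjoint: they share no vertices except possibly those in
`{x1, y1} ∩ {x2, y2}`. -/
def InternallyDisjoint (p1 : List V) (x1 y1 : V) (p2 : List V) (x2 y2 : V) : Prop :=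
  ∀ u, u ∈ p1 → u ∈ p2 → u ∈ ({x1, y1} ∩ {x2, y2} : Set V)

/-- `(a, b)` is a twin-crossing pair for paths `p1`, `p2`. -/
def TwinCrossingPair (p1 p2 : List V) (a b : V) : Prop :=
  a ≠ b ∧ Precedes p1 a b ∧ Precedes p2 a b ∧ subpath p1 a b ≠ subpath p2 a b

/-- The swap operation `φ_{a,b}(P1, P2)`. -/
def swap (p1 : List V) (x1 y1 : V) (p2 : List V) (x2 y2 : V) (a b : V) :
    List V × List V :=
  (pathConcat (pathConcat (subpath p1 x1 a) (subpath p2 a b)) (subpath p1 b y1),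
   pathConcat (pathConcat (subpath p2 x2 a) (subpath p1 a b)) (subpath p2 b y2))

/-- The graph with vertex `u` deleted. -/
def deleteVertex (E : V → V → Prop) (u : V) : V → V → Prop :=
  fun a b => E a b ∧ a ≠ u ∧ b ≠ u

/-- `u` is distance-critical for `(x, y)` : deleting `u` strictly increases
the distance from `x` to `y`. -/
def DistCritical (E : V → V → Prop) (ℓ : V → V → ℝ) (x y u : V) : Prop :=
  dist E ℓ x y < dist (deleteVertex E u) ℓ x y

/-- `Δ(x, y)` : the distance-critical vertices for `(x, y)` together with the
endpoints `x`, `y`. -/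
def Delta (E : V → V → Prop) (ℓ : V → V → ℝ) (x y : V) : Set V :=
  {u | DistCritical E ℓ x y u} ∪ {x, y}

/-- `δ(x, y) = |Δ(x, y)|`. -/
noncomputable def deltaCard (E : V → V → Prop) (ℓ : V → V → ℝ) (x y : V) : ℕ :=
  (Delta E ℓ x y).ncard

/-- `(a, b)` is a concordant pair for paths `p1` (from `x1` to `y1`) and
`p2` (from `x2` to `y2`). -/
def ConcordantPair (p1 : List V) (x1 y1 : V) (p2 : List V) (x2 y2 : V) (a b : V) : Prop :=
  a ∉ ({x1, y1} ∩ {x2, y2} : Set V) ∧ b ∉ ({x1, y1} ∩ {x2, y2} : Set V) ∧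
  Precedes p1 a b ∧ Precedes p2 a b ∧
  InternallyDisjoint (subpath p1 x1 a) x1 a (subpath p2 x2 a) x2 a ∧
  InternallyDisjoint (subpath p1 b y1) b y1 (subpath p2 b y2) b y2

/-- `𝒞(P1, P2)` : the set of concordant pairs for `(P1, P2)`. -/
def concordantSet (p1 : List V) (x1 y1 : V) (p2 : List V) (x2 y2 : V) : Set (V × V) :=
  {c | ConcordantPair p1 x1 y1 p2 x2 y2 c.1 c.2}

/-- The interaction complexity `γ(P1, P2) = Σ_{(v,w) ∈ 𝒞(P1,P2)} δ(v, w)`. -/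
noncomputable def gamma (E : V → V → Prop) (ℓ : V → V → ℝ)
    (p1 : List V) (x1 y1 : V) (p2 : List V) (x2 y2 : V) : ℕ :=
  ∑ᶠ c ∈ concordantSet p1 x1 y1 p2 x2 y2, deltaCard E ℓ c.1 c.2

/-- `E(x, y)` : the set of edges lying on at least one shortest path
from `x` to `y`. -/
def shortestEdges (E : V → V → Prop) (ℓ : V → V → ℝ) (x y : V) : Set (V × V) :=
  {e | ∃ p : List V, IsShortestPath E ℓ p x y ∧ e ∈ pathEdges p}

section Poly

variable (F : Type*) [Field F] [CharP F 2]

/-- The monomial `f(P) = ∏_{e ∈ E(P)} z_e` of a path. -/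
noncomputable def pathMon (p : List V) : MvPolynomial (V × V) F :=
  ((pathEdges p).map fun e => MvPolynomial.X e).prod

/-- The enumerating polynomial of a collection of paths. -/
noncomputable def enumPoly (S : Set (List V)) : MvPolynomial (V × V) F :=
  ∑ᶠ p ∈ S, pathMon F p

/-- The enumerating polynomial of a collection of pairs of paths. -/
noncomputable def enumPoly2 (S : Set (List V × List V)) : MvPolynomial (V × V) F :=
  ∑ᶠ q ∈ S, pathMon F q.1 * pathMon F q.2

variable (E : V → V → Prop) (ℓ : V → V → ℝ)

/-- `F(x, y)` : the enumerating polynomial of `Π(x, y)`. -/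
noncomputable def Fpoly (x y : V) : MvPolynomial (V × V) F :=
  enumPoly F {p : List V | IsShortestPath E ℓ p x y}

end Poly

variable (E : V → V → Prop) (ℓ : V → V → ℝ)

/-- The collection of internally vertex-disjoint pairs
`(P1, P2) ∈ Π(x1, y1) × Π(x2, y2)`. -/
def disjPairs (x1 y1 x2 y2 : V) : Set (List V × List V) :=
  {q | IsShortestPath E ℓ q.1 x1 y1 ∧ IsShortestPath E ℓ q.2 x2 y2 ∧
       InternallyDisjoint q.1 x1 y1 q.2 x2 y2}

/-- Pairs `(P1, P2) ∈ Π(x1, y1) × Π(x2, y2)` such that `v ∈ V(P1) ∩ V(P2)`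
and the prefix `P1[x1, v]` and the suffix `P2[v, y2]` are internally
vertex-disjoint (defining `H_v`). -/
def HvPairs (v x1 y1 x2 y2 : V) : Set (List V × List V) :=
  {q | IsShortestPath E ℓ q.1 x1 y1 ∧ IsShortestPath E ℓ q.2 x2 y2 ∧
       v ∈ q.1 ∧ v ∈ q.2 ∧
       InternallyDisjoint (subpath q.1 x1 v) x1 v (subpath q.2 v y2) v y2}

/-- Pairs `(P1, P2) ∈ Π(x1, y1) × Π(x2, y2)` such that
`(a, v) ∈ E(P1) ∩ E(P2)` and the prefix `P1[x1, a]` and the suffix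
`P2[v, y2]` are internally vertex-disjoint (defining `H_{av}`). -/
def HavPairs (a v x1 y1 x2 y2 : V) : Set (List V × List V) :=
  {q | IsShortestPath E ℓ q.1 x1 y1 ∧ IsShortestPath E ℓ q.2 x2 y2 ∧
       (a, v) ∈ pathEdges q.1 ∧ (a, v) ∈ pathEdges q.2 ∧
       InternallyDisjoint (subpath q.1 x1 a) x1 a (subpath q.2 v y2) v y2}

/-- Pairs `(P1, P2) ∈ Π(x1, y1) × Π(x2, y2)` such that `v ∈ V(P1) ∩ V(P2)`
and the prefix `P1[x1, v]` is internally vertex-disjoint from both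
`P2[x2, v]` and `P2[v, y2]` (defining `D_v`). -/
def DvPairs (v x1 y1 x2 y2 : V) : Set (List V × List V) :=
  {q | IsShortestPath E ℓ q.1 x1 y1 ∧ IsShortestPath E ℓ q.2 x2 y2 ∧
       v ∈ q.1 ∧ v ∈ q.2 ∧
       InternallyDisjoint (subpath q.1 x1 v) x1 v (subpath q.2 x2 v) x2 v ∧
       InternallyDisjoint (subpath q.1 x1 v) x1 v (subpath q.2 v y2) v y2}

/-- Pairs `(P1, P2) ∈ Π(x1, y1) × Π(x2, y2)` with interaction complexity
`γ(P1, P2) ≤ k` (defining `F_{disj,k}`). -/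
def disjkPairs (k : ℤ) (x1 y1 x2 y2 : V) : Set (List V × List V) :=
  {q | IsShortestPath E ℓ q.1 x1 y1 ∧ IsShortestPath E ℓ q.2 x2 y2 ∧
       (gamma E ℓ q.1 x1 y1 q.2 x2 y2 : ℤ) ≤ k}

/-- Pairs `(P1, P2) ∈ Π(x1, y1) × Π(x2, y2)` with `γ(P1, P2) ≤ k` such that
`(v, w) ∈ 𝒞(P1, P2)` and `(v, w)` is the concordant pair appearing first
along `P1` (defining `D_{v,w,k}`). -/
def DvwkPairs (k : ℤ) (v w x1 y1 x2 y2 : V) : Set (List V × List V) :=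
  {q | IsShortestPath E ℓ q.1 x1 y1 ∧ IsShortestPath E ℓ q.2 x2 y2 ∧
       (gamma E ℓ q.1 x1 y1 q.2 x2 y2 : ℤ) ≤ k ∧
       (v, w) ∈ concordantSet q.1 x1 y1 q.2 x2 y2 ∧
       ∀ c ∈ concordantSet q.1 x1 y1 q.2 x2 y2, q.1.idxOf v ≤ q.1.idxOf c.1}

/-- Pairs `(P1, P2) ∈ Π(x1, y1) × Π(x2, y2)` such that `v` and `w` lie on
both paths with `v` preceding `w` on both, the subpaths `P1[x1, v]` and
`P2[w, y2]` are internally vertex-disjoint, and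
`γ(P1[v, y1], P2[x2, w]) ≤ k` (defining `H_{v,w,k}`). -/
def HvwkPairs (k : ℤ) (v w x1 y1 x2 y2 : V) : Set (List V × List V) :=
  {q | IsShortestPath E ℓ q.1 x1 y1 ∧ IsShortestPath E ℓ q.2 x2 y2 ∧
       Precedes q.1 v w ∧ Precedes q.2 v w ∧
       InternallyDisjoint (subpath q.1 x1 v) x1 v (subpath q.2 w y2) w y2 ∧
       (gamma E ℓ (subpath q.1 v y1) v y1 (subpath q.2 x2 w) x2 w : ℤ) ≤ k}

/-- As `HvwkPairs`, additionally requiring the edge `(a, v)` on both paths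
(disjointness imposed on `P1[x1, a]` and `P2[w, y2]`), defining `H_{av,w,k}`. -/
def HavwkPairs (k : ℤ) (a v w x1 y1 x2 y2 : V) : Set (List V × List V) :=
  {q | IsShortestPath E ℓ q.1 x1 y1 ∧ IsShortestPath E ℓ q.2 x2 y2 ∧
       Precedes q.1 v w ∧ Precedes q.2 v w ∧
       (a, v) ∈ pathEdges q.1 ∧ (a, v) ∈ pathEdges q.2 ∧
       InternallyDisjoint (subpath q.1 x1 a) x1 a (subpath q.2 w y2) w y2 ∧
       (gamma E ℓ (subpath q.1 v y1) v y1 (subpath q.2 x2 w) x2 w : ℤ) ≤ k}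

/-- As `HvwkPairs`, additionally requiring the edge `(w, b)` on both paths
(disjointness imposed on `P1[x1, v]` and `P2[b, y2]`), defining `H_{v,wb,k}`. -/
def HvwbkPairs (k : ℤ) (v w b x1 y1 x2 y2 : V) : Set (List V × List V) :=
  {q | IsShortestPath E ℓ q.1 x1 y1 ∧ IsShortestPath E ℓ q.2 x2 y2 ∧
       Precedes q.1 v w ∧ Precedes q.2 v w ∧
       (w, b) ∈ pathEdges q.1 ∧ (w, b) ∈ pathEdges q.2 ∧
       InternallyDisjoint (subpath q.1 x1 v) x1 v (subpath q.2 b y2) b y2 ∧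
       (gamma E ℓ (subpath q.1 v y1) v y1 (subpath q.2 x2 w) x2 w : ℤ) ≤ k}

/-- As `HvwkPairs`, additionally requiring both edges `(a, v)` and `(w, b)`
on both paths (disjointness imposed on `P1[x1, a]` and `P2[b, y2]`),
defining `H_{av,wb,k}`. -/
def HavwbkPairs (k : ℤ) (a v w b x1 y1 x2 y2 : V) : Set (List V × List V) :=
  {q | IsShortestPath E ℓ q.1 x1 y1 ∧ IsShortestPath E ℓ q.2 x2 y2 ∧
       Precedes q.1 v w ∧ Precedes q.2 v w ∧
       (a, v) ∈ pathEdges q.1 ∧ (a, v) ∈ pathEdges q.2 ∧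
       (w, b) ∈ pathEdges q.1 ∧ (w, b) ∈ pathEdges q.2 ∧
       InternallyDisjoint (subpath q.1 x1 a) x1 a (subpath q.2 b y2) b y2 ∧
       (gamma E ℓ (subpath q.1 v y1) v y1 (subpath q.2 x2 w) x2 w : ℤ) ≤ k}


set_option linter.unusedSectionVars false

section Aux

lemma pw_cons_cons (ℓ : V → V → ℝ) (x y : V) (t : List V) :
    pathWeight ℓ (x :: y :: t) = ℓ x y + pathWeight ℓ (y :: t) := by
  simp [pathWeight, pathEdges]

lemma pw_single (ℓ : V → V → ℝ) (x : V) : pathWeight ℓ [x] = 0 := by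
  simp [pathWeight, pathEdges]

lemma pw_append (ℓ : V → V → ℝ) :
    ∀ (a : List V) (b : List V) (h : a ≠ []),
      pathWeight ℓ (a ++ b) = pathWeight ℓ a + pathWeight ℓ (a.getLast h :: b)
  | [], _, h => absurd rfl h
  | [x], b, _ => by simp [pw_single]
  | x :: y :: t, b, _ => by
    have ih := pw_append ℓ (y :: t) b (by simp)
    show pathWeight ℓ (x :: y :: (t ++ b)) = _
    rw [pw_cons_cons, show (y :: (t ++ b)) = (y :: t) ++ b from rfl, ih,
      pw_cons_cons, List.getLast_cons (by simp : (y :: t) ≠ [])]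
    ring

lemma pw_concat (ℓ : V → V → ℝ) (a b : List V) (ha : a ≠ []) (hb : b ≠ [])
    (hglue : a.getLast ha = b.head hb) :
    pathWeight ℓ (a ++ b.tail) = pathWeight ℓ a + pathWeight ℓ b := by
  rw [pw_append ℓ a b.tail ha, hglue, List.cons_head_tail hb]

lemma take_len {p : List V} {i : ℕ} (h : i < p.length) :
    (p.take (i+1)).length = i + 1 := by
  rw [List.length_take]; omega

lemma take_ne_nil {p : List V} {i : ℕ} (h : i < p.length) : p.take (i+1) ≠ [] := by
  intro hnil
  have := take_len (p := p) h
  rw [hnil] at this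
  simp at this

lemma take_getLast {p : List V} {i : ℕ} (h : i < p.length) :
    (p.take (i+1)).getLast (take_ne_nil h) = p[i] := by
  rw [List.getLast_eq_getElem]
  simp only [take_len h, Nat.add_sub_cancel, List.getElem_take]

lemma pw_split (ℓ : V → V → ℝ) (p : List V) (i : ℕ) (h : i < p.length) :
    pathWeight ℓ p = pathWeight ℓ (p.take (i+1)) + pathWeight ℓ (p.drop i) := by
  conv_lhs => rw [← List.take_append_drop (i+1) p]
  rw [pw_append ℓ _ _ (take_ne_nil h), List.drop_eq_getElem_cons h, take_getLast h]

end Aux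
section Aux2

variable {E : V → V → Prop}

lemma chain'_getElem {p : List V} (hc : p.Chain' E) {i : ℕ} (h : i + 1 < p.length) :
    E p[i] p[i+1] := by
  rw [List.Chain', List.isChain_iff_getElem] at hc
  exact hc i (by omega)

lemma concat_bundle (ℓ : V → V → ℝ) {a b : List V} {m : V}
    (hca : a.Chain' E) (hcb : b.Chain' E)
    (hal : a.getLast? = some m) (hbh : b.head? = some m) :
    (a ++ b.tail).Chain' E ∧ (a ++ b.tail).head? = a.head? ∧
    (a ++ b.tail).getLast? = b.getLast? ∧
    pathWeight ℓ (a ++ b.tail) = pathWeight ℓ a + pathWeight ℓ b := by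
  have ha : a ≠ [] := by rintro rfl; simp at hal
  have hb : b ≠ [] := by rintro rfl; simp at hbh
  have hal' : a.getLast ha = m := by
    rw [List.getLast?_eq_getLast ha] at hal
    exact Option.some.inj hal
  have hbh' : b.head hb = m := by
    rw [List.head?_eq_head hb] at hbh
    exact Option.some.inj hbh
  refine ⟨?_, ?_, ?_, ?_⟩
  · rw [List.Chain', List.isChain_append]
    refine ⟨hca, hcb.tail, ?_⟩
    intro x hx y hy
    obtain ⟨c, t, rfl⟩ := List.exists_cons_of_ne_nil hb
    cases t with
    | nil => simp at hy
    | cons d t' =>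
      simp only [List.tail_cons, List.head?_cons, Option.mem_def, Option.some.injEq] at hy
      rw [List.getLast?_eq_getLast ha, Option.mem_def, Option.some.injEq] at hx
      have : E c d := (List.isChain_cons_cons.mp hcb).1
      rw [← hy, ← hx, hal', ← hbh']
      simpa using this
  · exact List.head?_append_of_ne_nil a ha
  · obtain ⟨c, t, rfl⟩ := List.exists_cons_of_ne_nil hb
    cases t with
    | nil =>
      simp only [List.tail_cons, List.append_nil]
      rw [List.getLast?_eq_getLast ha, hal', ← hbh']
      simp
    | cons d t' =>
      rw [List.tail_cons, List.getLast?_append_of_ne_nil a (by simp)]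
      simp
  · rw [pw_concat ℓ a b ha hb (hal'.trans hbh'.symm)]

lemma not_nodup_dup {p : List V} (h : ¬ p.Nodup) :
    ∃ i j : ℕ, ∃ (hij : i < j) (hj : j < p.length), p[i]'(by omega) = p[j]'hj := by
  rw [List.nodup_iff_injective_get] at h
  rw [Function.Injective] at h
  push_neg at h
  obtain ⟨⟨i, hi⟩, ⟨j, hj⟩, heq, hne⟩ := h
  rcases Nat.lt_or_ge i j with hlt | hge
  · exact ⟨i, j, hlt, hj, by simpa [List.get_eq_getElem] using heq⟩
  · have hlt : j < i := by
      rcases Nat.lt_or_ge j i with h' | h'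
      · exact h'
      · exact absurd (by omega : i = j) (by simpa using hne)
    exact ⟨j, i, hlt, hi, by simpa [List.get_eq_getElem] using heq.symm⟩

end Aux2
section Aux3

variable {E : V → V → Prop}

lemma drop_head? {p : List V} {i : ℕ} (h : i < p.length) :
    (p.drop i).head? = some (p[i]'h) := by
  rw [List.head?_drop, List.getElem?_eq_getElem h]

lemma drop_getLast? {p : List V} {i : ℕ} (h : i < p.length) :
    (p.drop i).getLast? = p.getLast? := by
  rw [List.getLast?_eq_getElem?, List.getLast?_eq_getElem?, List.getElem?_drop,
    List.length_drop]
  congr 1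
  omega

lemma take_head? {p : List V} {i : ℕ} : (p.take (i+1)).head? = p.head? := by
  rw [List.head?_eq_getElem?, List.head?_eq_getElem?, List.getElem?_take_of_lt (by omega)]

lemma take_getLast? {p : List V} {i : ℕ} (h : i < p.length) :
    (p.take (i+1)).getLast? = some (p[i]'h) := by
  rw [List.getLast?_eq_getElem?, take_len h, Nat.add_sub_cancel,
    List.getElem?_take_of_lt (by omega), List.getElem?_eq_getElem h]

lemma subseg_head? {p : List V} {i k : ℕ} (h : i < p.length) :
    ((p.drop i).take (k+1)).head? = some (p[i]'h) := by
  rw [take_head?, drop_head? h]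

lemma subseg_getLast? {p : List V} {i k : ℕ} (h : i + k < p.length) :
    ((p.drop i).take (k+1)).getLast? = some (p[i+k]'h) := by
  rw [take_getLast? (by rw [List.length_drop]; omega)]
  congr 1
  rw [List.getElem_drop]

lemma subseg_chain' {p : List V} (hc : p.Chain' E) {i k : ℕ} :
    ((p.drop i).take k).Chain' E := (hc.drop i).take k

lemma surgery (ℓ : V → V → ℝ) {p : List V} (hc : p.Chain' E)
    {i j : ℕ} (hij : i < j) (hj : j < p.length)
    (heq : p[i]'(by omega) = p[j]'hj) :
    (p.take (i+1) ++ p.drop (j+1)).Chain' E ∧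
    (p.take (i+1) ++ p.drop (j+1)).head? = p.head? ∧
    (p.take (i+1) ++ p.drop (j+1)).getLast? = p.getLast? ∧
    (p.take (i+1) ++ p.drop (j+1)).length = p.length - (j - i) ∧
    ((p.drop i).take (j-i+1)).Chain' E ∧
    ((p.drop i).take (j-i+1)).head? = some (p[i]'(by omega)) ∧
    ((p.drop i).take (j-i+1)).getLast? = some (p[j]'hj) ∧
    ((p.drop i).take (j-i+1)).length = j - i + 1 ∧
    pathWeight ℓ p = pathWeight ℓ (p.take (i+1) ++ p.drop (j+1))
      + pathWeight ℓ ((p.drop i).take (j-i+1)) := by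
  have hi : i < p.length := by omega
  refine ⟨?_, ?_, ?_, ?_, subseg_chain' hc, subseg_head? hi, ?_, ?_, ?_⟩
  · rw [List.Chain', List.isChain_append]
    refine ⟨hc.take _, hc.drop _, ?_⟩
    intro x hx y hy
    rw [take_getLast? hi, Option.mem_def, Option.some.injEq] at hx
    rcases Nat.lt_or_ge (j+1) p.length with hj1 | hj1
    · rw [drop_head? hj1, Option.mem_def, Option.some.injEq] at hy
      rw [← hx, ← hy, heq]
      exact chain'_getElem hc hj1
    · rw [List.drop_eq_nil_of_le (by omega)] at hy
      simp at hy
  · rw [List.head?_append_of_ne_nil _ (take_ne_nil hi), take_head?]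
  · rcases Nat.lt_or_ge (j+1) p.length with hj1 | hj1
    · rw [List.getLast?_append_of_ne_nil _ (by
        intro hnil
        have := congrArg List.length hnil
        rw [List.length_drop] at this
        simp at this
        omega), drop_getLast? hj1]
    · rw [List.drop_eq_nil_of_le (by omega), List.append_nil, take_getLast? hi,
        List.getLast?_eq_getElem?, heq, List.getElem?_eq_getElem (by omega : p.length - 1 < p.length)]
      simp only [show p.length - 1 = j by omega]
  · rw [List.length_append, take_len hi, List.length_drop]
    omega
  · rw [subseg_getLast? (by omega : i + (j - i) < p.length)]
    simp only [show i + (j - i) = j by omega]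
  · rw [List.length_take, List.length_drop]
    omega
  · have e1 : pathWeight ℓ p
        = pathWeight ℓ (p.take (i+1)) + pathWeight ℓ (p.drop i) := pw_split ℓ p i hi
    have e2 : pathWeight ℓ (p.drop i) = pathWeight ℓ ((p.drop i).take (j-i+1))
        + pathWeight ℓ ((p.drop i).drop (j-i)) := by
      have := pw_split ℓ (p.drop i) (j-i) (by rw [List.length_drop]; omega)
      linarith
    have e3 : (p.drop i).drop (j-i) = p.drop j := by
      rw [List.drop_drop]
      congr 1
      omega
    have e4 : pathWeight ℓ (p.take (i+1) ++ p.drop (j+1))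
        = pathWeight ℓ (p.take (i+1)) + pathWeight ℓ (p.drop j) := by
      rw [pw_append ℓ _ _ (take_ne_nil hi), take_getLast hi, heq,
        ← List.drop_eq_getElem_cons hj]
    rw [e3] at e2
    linarith

end Aux3
section Aux4

variable {E : V → V → Prop}

lemma closed_pos_aux {ℓ : V → V → ℝ} (hG : NoNonposCycle E ℓ) :
    ∀ n (p : List V), p.length ≤ n → p.Chain' E → p.head? = p.getLast? →
      2 ≤ p.length → 0 < pathWeight ℓ p := by
  intro n
  induction n with
  | zero => intro p hn _ _ h2; omega
  | succ n ih =>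
    intro p hn hc hcl h2
    by_cases hnd : p.tail.Nodup
    · exact hG p ⟨h2, hc, hcl, hnd⟩
    · obtain ⟨i, j, hij, hj, heq⟩ := not_nodup_dup hnd
      rw [List.length_tail] at hj
      have hj' : j + 1 < p.length := by omega
      have heq' : p[i+1]'(by omega) = p[j+1]'hj' := by
        rw [← List.getElem_tail (i := i), ← List.getElem_tail (i := j)]
        exact heq
      obtain ⟨cq, chq, clq, lenq, cc, hcc, lcc, lenc, wsum⟩ :=
        surgery ℓ hc (show i+1 < j+1 by omega) hj' heq'
      have h1 : 0 < pathWeight ℓ (p.take (i+1+1) ++ p.drop (j+1+1)) := by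
        refine ih _ (by omega) cq (by rw [chq, clq]; exact hcl) (by omega)
      have h2c : 0 < pathWeight ℓ ((p.drop (i+1)).take ((j+1)-(i+1)+1)) := by
        refine ih _ (by omega) cc (by rw [hcc, lcc]; exact congrArg some heq') (by omega)
      linarith

lemma closed_pos {ℓ : V → V → ℝ} (hG : NoNonposCycle E ℓ) {p : List V}
    (hc : p.Chain' E) (hcl : p.head? = p.getLast?) (h2 : 2 ≤ p.length) :
    0 < pathWeight ℓ p :=
  closed_pos_aux hG p.length p le_rfl hc hcl h2

lemma walk_to_path_aux {ℓ : V → V → ℝ} (hG : NoNonposCycle E ℓ) :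
    ∀ n (p : List V), p.length ≤ n → p ≠ [] → p.Chain' E →
      ∃ q : List V, q ≠ [] ∧ q.Nodup ∧ q.Chain' E ∧ q.head? = p.head? ∧
        q.getLast? = p.getLast? ∧ pathWeight ℓ q ≤ pathWeight ℓ p := by
  intro n
  induction n with
  | zero =>
    intro p hn hne _
    exact absurd (List.length_eq_zero_iff.mp (by omega)) hne
  | succ n ih =>
    intro p hn hne hc
    by_cases hnd : p.Nodup
    · exact ⟨p, hne, hnd, hc, rfl, rfl, le_rfl⟩
    · obtain ⟨i, j, hij, hj, heq⟩ := not_nodup_dup hnd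
      obtain ⟨cq, chq, clq, lenq, cc, hcc, lcc, lenc, wsum⟩ := surgery ℓ hc hij hj heq
      have hpos : 0 < pathWeight ℓ ((p.drop i).take (j-i+1)) := by
        refine closed_pos hG cc (by rw [hcc, lcc]; exact congrArg some heq) (by omega)
      have hqne : p.take (i+1) ++ p.drop (j+1) ≠ [] := by
        intro hnil
        have := congrArg List.length hnil
        rw [lenq] at this
        simp at this
        omega
      obtain ⟨q, q1, q2, q3, q4, q5, q6⟩ :=
        ih (p.take (i+1) ++ p.drop (j+1)) (by omega) hqne cq
      exact ⟨q, q1, q2, q3, q4.trans chq, q5.trans clq, by linarith⟩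

lemma walk_to_path {ℓ : V → V → ℝ} (hG : NoNonposCycle E ℓ) {p : List V}
    (hne : p ≠ []) (hc : p.Chain' E) :
    ∃ q : List V, q ≠ [] ∧ q.Nodup ∧ q.Chain' E ∧ q.head? = p.head? ∧
      q.getLast? = p.getLast? ∧ pathWeight ℓ q ≤ pathWeight ℓ p :=
  walk_to_path_aux hG p.length p le_rfl hne hc

end Aux4
section Aux5

variable {E : V → V → Prop}

lemma idx_eq_eq {p : List V} {u v : V} (hu : u ∈ p) (hv : v ∈ p)
    (h : p.idxOf u = p.idxOf v) : u = v := by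
  have h1 : p[p.idxOf u]'(List.idxOf_lt_length_iff.mpr hu) = u := List.getElem_idxOf _
  have h2 : p[p.idxOf v]'(List.idxOf_lt_length_iff.mpr hv) = v := List.getElem_idxOf _
  rw [← h1, ← h2]
  simp only [h]

lemma indexOf_take {p : List V} {u : V} {k : ℕ} (h : u ∈ p.take k) :
    (p.take k).idxOf u = p.idxOf u := by
  conv_rhs => rw [← List.take_append_drop k p]
  rw [List.idxOf_append_of_mem h]

lemma mem_take_iff {p : List V} {u : V} {k : ℕ} :
    u ∈ p.take k ↔ u ∈ p ∧ p.idxOf u < k := by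
  constructor
  · intro h
    refine ⟨List.mem_of_mem_take h, ?_⟩
    rw [← indexOf_take h]
    calc (p.take k).idxOf u < (p.take k).length := List.idxOf_lt_length_iff.mpr h
      _ ≤ k := List.length_take_le k p
  · rintro ⟨hu, hk⟩
    have hlen : p.idxOf u < (p.take k).length := by
      rw [List.length_take]
      have := List.idxOf_lt_length_iff.mpr hu
      omega
    have : (p.take k)[p.idxOf u] = u := by
      rw [List.getElem_take]
      exact List.getElem_idxOf _
    rw [← this]
    exact List.getElem_mem _
  
lemma mem_drop_iff {p : List V} (hnd : p.Nodup) {u : V} {k : ℕ} :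
    u ∈ p.drop k ↔ u ∈ p ∧ k ≤ p.idxOf u := by
  constructor
  · intro h
    refine ⟨List.mem_of_mem_drop h, ?_⟩
    have hk : k ≤ p.length := by
      by_contra hk
      rw [List.drop_eq_nil_of_le (by omega)] at h
      simp at h
    have hnm : u ∉ p.take k := by
      intro hmem
      exact (List.disjoint_take_drop hnd le_rfl) hmem h
    have : p.idxOf u = (p.take k).length + (p.drop k).idxOf u := by
      conv_lhs => rw [← List.take_append_drop k p]
      exact List.idxOf_append_of_notMem hnm
    rw [this, List.length_take]
    omega
  · rintro ⟨hu, hk⟩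
    have hnm : u ∉ p.take k := by
      intro hmem
      have := (mem_take_iff.mp hmem).2
      omega
    have : u ∈ p.take k ++ p.drop k := by rw [List.take_append_drop]; exact hu
    rcases List.mem_append.mp this with h | h
    · exact absurd h hnm
    · exact h

lemma subpath_eq {p : List V} {x y : V} (hle : p.idxOf x ≤ p.idxOf y) :
    subpath p x y = (p.drop (p.idxOf x)).take (p.idxOf y - p.idxOf x + 1) := by
  unfold subpath
  rw [List.take_drop, show p.idxOf x + (p.idxOf y - p.idxOf x + 1) = p.idxOf y + 1
    by omega]

lemma subpath_head? {p : List V} {x y : V} (hx : x ∈ p)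
    (hle : p.idxOf x ≤ p.idxOf y) : (subpath p x y).head? = some x := by
  rw [subpath_eq hle, subseg_head? (List.idxOf_lt_length_iff.mpr hx),
    List.getElem_idxOf]

lemma subpath_getLast? {p : List V} {x y : V} (hy : y ∈ p)
    (hle : p.idxOf x ≤ p.idxOf y) : (subpath p x y).getLast? = some y := by
  have hiy := List.idxOf_lt_length_iff.mpr hy
  rw [subpath_eq hle, subseg_getLast? (show p.idxOf x + (p.idxOf y - p.idxOf x)
    < p.length by omega)]
  simp only [show p.idxOf x + (p.idxOf y - p.idxOf x) = p.idxOf y by omega,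
    List.getElem_idxOf]

lemma subpath_ne_nil {p : List V} {x y : V} (hx : x ∈ p)
    (hle : p.idxOf x ≤ p.idxOf y) : subpath p x y ≠ [] := by
  intro h
  have := subpath_head? hx hle
  rw [h] at this
  simp at this

lemma subpath_chain' {p : List V} (hc : p.Chain' E) {x y : V} :
    (subpath p x y).Chain' E := (hc.take _).drop _

lemma subpath_sublist {p : List V} {x y : V} : List.Sublist (subpath p x y) p :=
  (List.drop_sublist _ _).trans (List.take_sublist _ _)

lemma subpath_nodup {p : List V} (hnd : p.Nodup) {x y : V} :
    (subpath p x y).Nodup := hnd.sublist subpath_sublist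

lemma subpath_length {p : List V} {x y : V} (hy : y ∈ p)
    (hle : p.idxOf x ≤ p.idxOf y) :
    (subpath p x y).length = p.idxOf y - p.idxOf x + 1 := by
  have hiy := List.idxOf_lt_length_iff.mpr hy
  rw [subpath_eq hle, List.length_take, List.length_drop]
  omega

lemma subpath_isPathFrom {p : List V} (hp : IsPath E p) {x y : V} (hx : x ∈ p)
    (hy : y ∈ p) (hle : p.idxOf x ≤ p.idxOf y) :
    IsPathFrom E (subpath p x y) x y :=
  ⟨⟨subpath_ne_nil hx hle, subpath_nodup hp.2.1, subpath_chain' hp.2.2⟩,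
    subpath_head? hx hle, subpath_getLast? hy hle⟩

lemma mem_subpath_iff {p : List V} (hnd : p.Nodup) {x y u : V} (hy : y ∈ p)
    (hle : p.idxOf x ≤ p.idxOf y) :
    u ∈ subpath p x y ↔ u ∈ p ∧ p.idxOf x ≤ p.idxOf u ∧ p.idxOf u ≤ p.idxOf y := by
  have hiy := List.idxOf_lt_length_iff.mpr hy
  unfold subpath
  have hLnd : (p.take (p.idxOf y + 1)).Nodup := hnd.sublist (List.take_sublist _ _)
  rw [mem_drop_iff hLnd]
  constructor
  · rintro ⟨hmem, hidx⟩
    obtain ⟨hu, hlt⟩ := mem_take_iff.mp hmem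
    rw [indexOf_take hmem] at hidx
    exact ⟨hu, hidx, by omega⟩
  · rintro ⟨hu, h1, h2⟩
    have hmem : u ∈ p.take (p.idxOf y + 1) := mem_take_iff.mpr ⟨hu, by omega⟩
    exact ⟨hmem, by rw [indexOf_take hmem]; exact h1⟩

lemma subpath_split_w (ℓ : V → V → ℝ) {p : List V} {x m y : V}
    (hy : y ∈ p) (h1 : p.idxOf x ≤ p.idxOf m) (h2 : p.idxOf m ≤ p.idxOf y) :
    pathWeight ℓ (subpath p x y)
      = pathWeight ℓ (subpath p x m) + pathWeight ℓ (subpath p m y) := by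
  have hiy := List.idxOf_lt_length_iff.mpr hy
  set ix := p.idxOf x
  set im := p.idxOf m
  set iy := p.idxOf y
  rw [subpath_eq (le_trans h1 h2), subpath_eq h1, subpath_eq h2]
  have hsplit := pw_split ℓ ((p.drop ix).take (iy-ix+1)) (im - ix)
    (by rw [List.length_take, List.length_drop]; omega)
  have eA : ((p.drop ix).take (iy-ix+1)).take (im-ix+1) = (p.drop ix).take (im-ix+1) := by
    rw [List.take_take, show min (im-ix+1) (iy-ix+1) = im-ix+1 by omega]
  have eB : ((p.drop ix).take (iy-ix+1)).drop (im-ix) = (p.drop im).take (iy-im+1) := by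
    rw [show iy-ix+1 = (im-ix) + (iy-im+1) by omega, ← List.take_drop, List.drop_drop,
      show ix + (im-ix) = im by omega]
  rw [eA, eB] at hsplit
  exact hsplit

end Aux5
section Aux6

lemma dist_le_pw {E : V → V → Prop} {ℓ : V → V → ℝ} {x y : V} {p : List V}
    (hp : IsPathFrom E p x y) :
    dist E ℓ x y ≤ (pathWeight ℓ p : EReal) :=
  sInf_le ⟨p, hp, rfl⟩

lemma subpath_shortest {E : V → V → Prop} {ℓ : V → V → ℝ} (hG : NoNonposCycle E ℓ)
    {P : List V} {x y : V} (hP : IsShortestPath E ℓ P x y) {a b : V}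
    (ha : a ∈ P) (hb : b ∈ P) (hle : P.idxOf a ≤ P.idxOf b) :
    (pathWeight ℓ (subpath P a b) : EReal) = dist E ℓ a b := by
  obtain ⟨⟨⟨hne, hnd, hch⟩, hhx, hly⟩, hw⟩ := hP
  have hia : P.idxOf a < P.length := List.idxOf_lt_length_iff.mpr ha
  have hib : P.idxOf b < P.length := List.idxOf_lt_length_iff.mpr hb
  have hsp : IsPathFrom E (subpath P a b) a b :=
    subpath_isPathFrom ⟨hne, hnd, hch⟩ ha hb hle
  refine le_antisymm ?_ (dist_le_pw hsp)
  by_contra hlt0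
  have hlt : dist E ℓ a b < (pathWeight ℓ (subpath P a b) : EReal) := not_le.mp hlt0
  unfold dist at hlt
  obtain ⟨z, ⟨q, hq, rfl⟩, hzlt⟩ := sInf_lt_iff.mp hlt
  have hqlt : pathWeight ℓ q < pathWeight ℓ (subpath P a b) := by exact_mod_cast hzlt
  obtain ⟨⟨hqne, hqnd, hqch⟩, hqh, hql⟩ := hq
  -- glue endpoints
  have hA_last : (P.take (P.idxOf a + 1)).getLast? = some a := by
    rw [take_getLast? hia, List.getElem_idxOf]
  have hsuf_head : (P.drop (P.idxOf b)).head? = some b := by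
    rw [drop_head? hib, List.getElem_idxOf]
  obtain ⟨z1c, z1h, z1l, z1w⟩ := concat_bundle ℓ (E := E) (hch.take _) hqch hA_last hqh
  obtain ⟨zc, zh, zl, zw⟩ := concat_bundle ℓ (E := E) z1c ((hch.drop _))
    (by rw [z1l, hql]) hsuf_head
  set Z := (P.take (P.idxOf a + 1) ++ q.tail) ++ (P.drop (P.idxOf b)).tail with hZ
  have hZne : Z ≠ [] := by
    intro h
    rw [hZ] at h
    have := congrArg List.length h
    simp [List.length_append, take_len hia] at this
  obtain ⟨r, hrne, hrnd, hrch, hrh, hrl, hrw⟩ := walk_to_path hG hZne zc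
  have hrfrom : IsPathFrom E r x y := by
    refine ⟨⟨hrne, hrnd, hrch⟩, ?_, ?_⟩
    · rw [hrh, zh, z1h, take_head?, hhx]
    · rw [hrl, zl, drop_getLast? hib, hly]
  -- weight comparison
  have hPsplit : pathWeight ℓ P = pathWeight ℓ (P.take (P.idxOf a + 1))
      + pathWeight ℓ (subpath P a b) + pathWeight ℓ (P.drop (P.idxOf b)) := by
    have e1 := pw_split ℓ P (P.idxOf a) hia
    have e2 := pw_split ℓ (P.drop (P.idxOf a)) (P.idxOf b - P.idxOf a)
      (by rw [List.length_drop]; omega)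
    have e3 : (P.drop (P.idxOf a)).drop (P.idxOf b - P.idxOf a)
        = P.drop (P.idxOf b) := by
      rw [List.drop_drop, show P.idxOf a + (P.idxOf b - P.idxOf a) = P.idxOf b
        by omega]
    rw [e3, ← subpath_eq hle] at e2
    rw [e1, e2]
    ring
  have hZw : pathWeight ℓ Z = pathWeight ℓ (P.take (P.idxOf a + 1)) + pathWeight ℓ q
      + pathWeight ℓ (P.drop (P.idxOf b)) := by
    rw [hZ, zw, z1w]
  have hfin : pathWeight ℓ r < pathWeight ℓ P := by
    rw [hPsplit]
    rw [hZw] at hrw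
    linarith
  have h1 : dist E ℓ x y ≤ (pathWeight ℓ r : EReal) := dist_le_pw hrfrom
  rw [← hw] at h1
  have h2 : (pathWeight ℓ P : EReal) < (pathWeight ℓ r : EReal) + 1 := by
    exact lt_of_le_of_lt h1 (by exact_mod_cast lt_add_one _)
  have := lt_of_le_of_lt h1 (by exact_mod_cast hfin : (pathWeight ℓ r : EReal) < (pathWeight ℓ P : EReal))
  exact absurd this (lt_irrefl _)

end Aux6

/-- Let `(P1, P2) ∈ Π(s1, t1) × Π(s2, t2)` and let `v, w` be
vertices such that `v` precedes `w` on both paths. Then every internal vertex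
of `P1[v, w]` lying on `P2` is contained in `P2[v, w]`. -/
theorem internal_vertex_of_subpath_mem_subpath
    (hG : NoNonposCycle E ℓ) (s1 t1 s2 t2 v w : V) (P1 P2 : List V)
    (h1 : IsShortestPath E ℓ P1 s1 t1) (h2 : IsShortestPath E ℓ P2 s2 t2)
    (hv1 : Precedes P1 v w) (hv2 : Precedes P2 v w) :
    ∀ u, Internal (subpath P1 v w) u → u ∈ P2 → u ∈ subpath P2 v w := by
  obtain ⟨hv1m, hw1m, hle1⟩ := hv1
  obtain ⟨hv2m, hw2m, hle2⟩ := hv2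
  have nd1 : P1.Nodup := h1.1.1.2.1
  have nd2 : P2.Nodup := h2.1.1.2.1
  intro u hInt hu2
  obtain ⟨huS, hhne, hlne⟩ := hInt
  have huv : u ≠ v := fun h => by
    subst h; exact hhne (subpath_head? hv1m hle1)
  have huw : u ≠ w := fun h => by
    subst h; exact hlne (subpath_getLast? hw1m hle1)
  obtain ⟨hu1, hleft1, hright1⟩ := (mem_subpath_iff nd1 hw1m hle1).mp huS
  have e_vw : pathWeight ℓ (subpath P1 v w) = pathWeight ℓ (subpath P2 v w) := by
    have q1 := subpath_shortest hG h1 hv1m hw1m hle1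
    have q2 := subpath_shortest hG h2 hv2m hw2m hle2
    exact_mod_cast q1.trans q2.symm
  rcases Nat.lt_or_ge (P2.idxOf u) (P2.idxOf v) with hA | hge
  · exfalso
    have hle_uw2 : P2.idxOf u ≤ P2.idxOf w := by omega
    have e_uw : pathWeight ℓ (subpath P1 u w) = pathWeight ℓ (subpath P2 u w) := by
      have q1 := subpath_shortest hG h1 hu1 hw1m hright1
      have q2 := subpath_shortest hG h2 hu2 hw2m hle_uw2
      exact_mod_cast q1.trans q2.symm
    have s1 : pathWeight ℓ (subpath P1 v w)
        = pathWeight ℓ (subpath P1 v u) + pathWeight ℓ (subpath P1 u w) :=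
      subpath_split_w ℓ hw1m hleft1 hright1
    have s2 : pathWeight ℓ (subpath P2 u w)
        = pathWeight ℓ (subpath P2 u v) + pathWeight ℓ (subpath P2 v w) :=
      subpath_split_w ℓ hw2m (le_of_lt hA) hle2
    have hposs : 0 < pathWeight ℓ (subpath P2 u v) + pathWeight ℓ (subpath P1 v u) := by
      obtain ⟨zc, zh, zl, zw⟩ := concat_bundle ℓ (E := E)
        (subpath_chain' h2.1.1.2.2) (subpath_chain' h1.1.1.2.2)
        (subpath_getLast? hv2m (le_of_lt hA)) (subpath_head? hv1m hleft1)
      rw [← zw]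
      refine closed_pos hG zc ?_ ?_
      · rw [zh, zl, subpath_head? hu2 (le_of_lt hA), subpath_getLast? hu1 hleft1]
      · have lA := subpath_length hv2m (le_of_lt hA)
        rw [List.length_append]
        omega
    linarith
  · rcases Nat.lt_or_ge (P2.idxOf w) (P2.idxOf u) with hB | hle'
    · exfalso
      have e_vu : pathWeight ℓ (subpath P1 v u) = pathWeight ℓ (subpath P2 v u) := by
        have q1 := subpath_shortest hG h1 hv1m hu1 hleft1
        have q2 := subpath_shortest hG h2 hv2m hu2 (by omega)
        exact_mod_cast q1.trans q2.symm
      have s1 : pathWeight ℓ (subpath P1 v w)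
          = pathWeight ℓ (subpath P1 v u) + pathWeight ℓ (subpath P1 u w) :=
        subpath_split_w ℓ hw1m hleft1 hright1
      have s2 : pathWeight ℓ (subpath P2 v u)
          = pathWeight ℓ (subpath P2 v w) + pathWeight ℓ (subpath P2 w u) :=
        subpath_split_w ℓ hu2 hle2 (le_of_lt hB)
      have hposs : 0 < pathWeight ℓ (subpath P2 w u) + pathWeight ℓ (subpath P1 u w) := by
        obtain ⟨zc, zh, zl, zw⟩ := concat_bundle ℓ (E := E)
          (subpath_chain' h2.1.1.2.2) (subpath_chain' h1.1.1.2.2)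
          (subpath_getLast? hu2 (le_of_lt hB)) (subpath_head? hu1 hright1)
        rw [← zw]
        refine closed_pos hG zc ?_ ?_
        · rw [zh, zl, subpath_head? hw2m (le_of_lt hB), subpath_getLast? hw1m hright1]
        · have lA := subpath_length hu2 (le_of_lt hB)
          rw [List.length_append]
          omega
      linarith
    · exact (mem_subpath_iff nd2 hw2m hle2).mpr ⟨hu2, hge, hle'⟩


end DSP
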